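/- Let s₁, s₂, r, ω ∈ ℝ and y ∈ ℝ³ with y ≠ S and y ≠ R, where S = (s₁,s₂,0) and R = (0,0,r). Set A = ‖y−S‖ and B = ‖y−R‖. Then the determinant of the 3×3 real matrix with rows (−((y₂−s₂)²+y₃²)ω/A³, (y₁−s₁)(y₂−s₂)ω/A³, (y₁−s₁)/A + y₁/B), ((y₁−s₁)(y₂−s₂)ω/A³, −((y₁−s₁)²+y₃²)ω/A³, (y₂−s₂)/A + y₂/B), and (y₃(y₁−s₁)ω/A³, (y₂−s₂)y₃ω/A³, y₃/A + (y₃−r)/B) equals ω²·y₃·A⁻³·(1 + ⟨y−S, y−R⟩/(A·B)), where ⟨·,·⟩ is the Euclidean inner product on ℝ³. -/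

import Mathlib

set_option maxHeartbeats 1000000


/-- Determinant of the Jacobian `Dη/D(s₁,s₂,ω)` of the frequency part of the right
projection `π_R` for the dense-array borehole geometry, constant background sound speed:
it equals `ω² y₃ A⁻³ (1 + ⟨y−S, y−R⟩/(AB))`. -/
theorem denseArray_det_dpiR
    (s₁ s₂ r ω : ℝ) (y S R : EuclideanSpace ℝ (Fin 3))
    (hS : S = ![s₁, s₂, 0]) (hR : R = ![0, 0, r])
    (hyS : y ≠ S) (hyR : y ≠ R)
    (A B : ℝ) (hA : A = ‖y - S‖) (hB : B = ‖y - R‖) :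
    (!![-((y 1 - s₂) ^ 2 + (y 2) ^ 2) * ω / A ^ 3,
        (y 0 - s₁) * (y 1 - s₂) * ω / A ^ 3,
        (y 0 - s₁) / A + y 0 / B;
        (y 0 - s₁) * (y 1 - s₂) * ω / A ^ 3,
        -((y 0 - s₁) ^ 2 + (y 2) ^ 2) * ω / A ^ 3,
        (y 1 - s₂) / A + y 1 / B;
        y 2 * (y 0 - s₁) * ω / A ^ 3,
        (y 1 - s₂) * y 2 * ω / A ^ 3,
        y 2 / A + (y 2 - r) / B]).det
      = ω ^ 2 * y 2 * (A ^ 3)⁻¹ * (1 + (inner ℝ (y - S) (y - R) : ℝ) / (A * B)) := by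
  have hA0 : A ≠ 0 := by
    rw [hA, norm_ne_zero_iff, sub_ne_zero]; exact hyS
  have hB0 : B ≠ 0 := by
    rw [hB, norm_ne_zero_iff, sub_ne_zero]; exact hyR
  have hA2 : A ^ 2 = (y 0 - s₁) ^ 2 + (y 1 - s₂) ^ 2 + y 2 ^ 2 := by
    rw [hA, ← real_inner_self_eq_norm_sq, PiLp.inner_apply, Fin.sum_univ_three]
    simp [hS, RCLike.inner_apply]
  have hinner : (inner ℝ (y - S) (y - R) : ℝ)
      = (y 0 - s₁) * (y 0) + (y 1 - s₂) * (y 1) + y 2 * (y 2 - r) := by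
    rw [PiLp.inner_apply, Fin.sum_univ_three]
    simp [hS, hR, RCLike.inner_apply]
    ring
  rw [Matrix.det_fin_three, hinner]
  simp only [Matrix.of_apply, Matrix.cons_val', Matrix.cons_val_zero, Matrix.cons_val_one, Matrix.head_cons,
    Matrix.empty_val', Matrix.cons_val_fin_one, Matrix.head_fin_const, Matrix.cons_val_two,
    Matrix.tail_cons]
  trans (ω ^ 2 / A ^ 6 * (y 2 * (((y 0 - s₁) ^ 2 + (y 1 - s₂) ^ 2 + y 2 ^ 2) *
      (((y 0 - s₁) ^ 2 + (y 1 - s₂) ^ 2 + y 2 ^ 2) / A +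
        ((y 0 - s₁) * y 0 + (y 1 - s₂) * y 1 + y 2 * (y 2 - r)) / B))))
  · ring
  · rw [← hA2]
    field_simp
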